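/- The limit κ = lim_{m,n→∞} σ(Z_{m×n})^{1/(mn)} exists and equals sup_{m,n≥1} σ(Z_{m×n})^{1/((m+1)(n+1))}. -/

import Mathlib

/-- The m×n grid graph on {0,...,m-1}×{0,...,n-1}: edges between points at distance 1. -/
def gridGraph (m n : ℕ) : SimpleGraph (Fin m × Fin n) :=
  SimpleGraph.fromRel (fun u v =>
    (u.1 = v.1 ∧ u.2.1 + 1 = v.2.1) ∨ (u.2 = v.2 ∧ u.1.1 + 1 = v.1.1))

/-- S is a maximal independent set: independent, and every vertex outside S has a neighbor in S. -/
def IsMaxIndep {V : Type*} (G : SimpleGraph V) (S : Set V) : Prop :=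
  (∀ u ∈ S, ∀ v ∈ S, ¬ G.Adj u v) ∧ ∀ v ∉ S, ∃ u ∈ S, G.Adj v u

/-- The number of maximal independent sets of G. -/
noncomputable def numMIS {V : Type*} (G : SimpleGraph V) : ℕ :=
  Nat.card {S : Set V // IsMaxIndep G S}

lemma grid_adj {m n : ℕ} (u v : Fin m × Fin n) : (gridGraph m n).Adj u v ↔
    (u.1.1 = v.1.1 ∧ (u.2.1 + 1 = v.2.1 ∨ v.2.1 + 1 = u.2.1)) ∨
    (u.2.1 = v.2.1 ∧ (u.1.1 + 1 = v.1.1 ∨ v.1.1 + 1 = u.1.1)) := by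
  simp only [gridGraph, SimpleGraph.fromRel_adj, ne_eq, Prod.ext_iff, Fin.ext_iff, not_and]
  omega

lemma exists_MIS {V : Type*} [Finite V] (G : SimpleGraph V) :
    ∃ S : Set V, IsMaxIndep G S := by
  obtain ⟨S, hS, hmax⟩ := Set.Finite.exists_maximalFor (id : Set V → Set V)
    {S : Set V | ∀ u ∈ S, ∀ v ∈ S, ¬ G.Adj u v} (Set.toFinite _)
    ⟨∅, by simp⟩
  refine ⟨S, hS, fun v hv => ?_⟩
  by_contra h
  push_neg at h
  have : S ∪ {v} ∈ {S : Set V | ∀ u ∈ S, ∀ v ∈ S, ¬ G.Adj u v} := by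
    rintro x (hx | rfl) y (hy | rfl)
    · exact hS x hx y hy
    · exact fun hA => h x hx (hA.symm)
    · exact fun hA => h y hy hA
    · exact fun hA => G.irrefl hA
  have heq : S = S ∪ {v} := le_antisymm Set.subset_union_left (hmax this (by simp [Set.subset_union_left]))
  exact hv (heq ▸ (by simp : v ∈ S ∪ {v}))

lemma numMIS_pos {V : Type*} [Finite V] (G : SimpleGraph V) : 1 ≤ numMIS G := by
  have h := exists_MIS G
  have : Nonempty {S : Set V // IsMaxIndep G S} := ⟨⟨h.choose, h.choose_spec⟩⟩
  exact Nat.one_le_iff_ne_zero.mpr (Nat.card_pos).ne'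

lemma numMIS_le (m n : ℕ) : numMIS (gridGraph m n) ≤ 2 ^ (m * n) := by
  have h1 : numMIS (gridGraph m n) ≤ Nat.card (Set (Fin m × Fin n)) :=
    Nat.card_le_card_of_injective Subtype.val Subtype.val_injective
  calc numMIS (gridGraph m n) ≤ Nat.card (Set (Fin m × Fin n)) := h1
    _ = 2 ^ (m * n) := by
        simp [Nat.card_eq_fintype_card]

section Super

variable {m₁ m₂ n : ℕ}

def emb1 (m₂ : ℕ) (p : Fin m₁ × Fin n) : Fin (m₁ + m₂ + 1) × Fin n :=
  (⟨p.1.1, by omega⟩, p.2)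

def emb2 (m₁ : ℕ) (p : Fin m₂ × Fin n) : Fin (m₁ + m₂ + 1) × Fin n :=
  (⟨m₁ + 1 + p.1.1, by have := p.1.isLt; omega⟩, p.2)

def bigE (S₁ : Set (Fin m₁ × Fin n)) (S₂ : Set (Fin m₂ × Fin n)) :
    Set (Fin (m₁ + m₂ + 1) × Fin n) :=
  (emb1 m₂ '' S₁) ∪ (emb2 m₁ '' S₂)

/-- `free S₁ S₂ j` : the middle vertex in column `j` has no neighbour in the embedded sets. -/
def free (S₁ : Set (Fin m₁ × Fin n)) (S₂ : Set (Fin m₂ × Fin n)) (j : ℕ) : Prop :=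
  ∀ hj : j < n, ∀ v ∈ bigE S₁ S₂,
    ¬ (gridGraph (m₁ + m₂ + 1) n).Adj ((⟨m₁, by omega⟩ : Fin (m₁ + m₂ + 1)), ⟨j, hj⟩) v

/-- greedy selection along the middle row -/
def midsel (S₁ : Set (Fin m₁ × Fin n)) (S₂ : Set (Fin m₂ × Fin n)) : ℕ → Prop
  | 0 => free S₁ S₂ 0
  | (j+1) => free S₁ S₂ (j+1) ∧ ¬ midsel S₁ S₂ j

lemma midsel_free {S₁ : Set (Fin m₁ × Fin n)} {S₂ : Set (Fin m₂ × Fin n)} {j : ℕ}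
    (h : midsel S₁ S₂ j) : free S₁ S₂ j := by
  cases j with
  | zero => exact h
  | succ j => exact h.1

def bigS (S₁ : Set (Fin m₁ × Fin n)) (S₂ : Set (Fin m₂ × Fin n)) :
    Set (Fin (m₁ + m₂ + 1) × Fin n) :=
  bigE S₁ S₂ ∪ {p | p.1.1 = m₁ ∧ midsel S₁ S₂ p.2.1}

lemma emb1_row_lt (p : Fin m₁ × Fin n) : ((emb1 m₂ p).1 : ℕ) < m₁ := p.1.isLt

lemma emb2_row_gt (p : Fin m₂ × Fin n) : m₁ < ((emb2 m₁ p).1 : ℕ) := by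
  simp [emb2]; omega

lemma adj_emb1 {p q : Fin m₁ × Fin n} :
    (gridGraph (m₁ + m₂ + 1) n).Adj (emb1 m₂ p) (emb1 m₂ q) ↔ (gridGraph m₁ n).Adj p q := by
  simp only [grid_adj, emb1]

lemma adj_emb2 {p q : Fin m₂ × Fin n} :
    (gridGraph (m₁ + m₂ + 1) n).Adj (emb2 m₁ p) (emb2 m₁ q) ↔ (gridGraph m₂ n).Adj p q := by
  simp only [grid_adj, emb2]; omega

lemma not_adj_emb12 {p : Fin m₁ × Fin n} {q : Fin m₂ × Fin n} :
    ¬ (gridGraph (m₁ + m₂ + 1) n).Adj (emb1 m₂ p) (emb2 m₁ q) := by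
  have h1 := p.1.isLt
  simp only [grid_adj, emb1, emb2]
  omega

lemma big_indep {S₁ : Set (Fin m₁ × Fin n)} {S₂ : Set (Fin m₂ × Fin n)}
    (h₁ : IsMaxIndep (gridGraph m₁ n) S₁) (h₂ : IsMaxIndep (gridGraph m₂ n) S₂) :
    ∀ u ∈ bigS S₁ S₂, ∀ v ∈ bigS S₁ S₂, ¬ (gridGraph (m₁ + m₂ + 1) n).Adj u v := by
  -- first: E vs E
  have hEE : ∀ u ∈ bigE S₁ S₂, ∀ v ∈ bigE S₁ S₂, ¬ (gridGraph (m₁ + m₂ + 1) n).Adj u v := by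
    rintro u (⟨p, hp, rfl⟩ | ⟨p, hp, rfl⟩) v (⟨q, hq, rfl⟩ | ⟨q, hq, rfl⟩)
    · rw [adj_emb1]; exact h₁.1 p hp q hq
    · exact not_adj_emb12
    · intro h; exact not_adj_emb12 h.symm
    · rw [adj_emb2]; exact h₂.1 p hp q hq
  rintro u (hu | ⟨hu1, hu2⟩) v (hv | ⟨hv1, hv2⟩)
  · exact hEE u hu v hv
  · -- u ∈ E, v middle
    intro h
    have hv' : v = ((⟨m₁, by omega⟩ : Fin (m₁ + m₂ + 1)), v.2) := by
      ext <;> simp [hv1]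
    have := midsel_free hv2 v.2.isLt u hu
    rw [Fin.eta] at this
    exact this (by rw [← hv'] at *; exact h.symm)
  · intro h
    have := midsel_free hu2 u.2.isLt v hv
    rw [Fin.eta] at this
    apply this
    have hu' : u = ((⟨m₁, by omega⟩ : Fin (m₁ + m₂ + 1)), u.2) := by
      ext <;> simp [hu1]
    rw [← hu']; exact h
  · -- both middle
    intro h
    rw [grid_adj] at h
    rcases h with ⟨_, hc⟩ | ⟨_, hr⟩
    · rcases hc with h | h
      · rw [← h] at hv2; exact hv2.2 hu2
      · rw [← h] at hu2; exact hu2.2 hv2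
    · omega


lemma big_maximal {S₁ : Set (Fin m₁ × Fin n)} {S₂ : Set (Fin m₂ × Fin n)}
    (h₁ : IsMaxIndep (gridGraph m₁ n) S₁) (h₂ : IsMaxIndep (gridGraph m₂ n) S₂) :
    ∀ v ∉ bigS S₁ S₂, ∃ u ∈ bigS S₁ S₂, (gridGraph (m₁ + m₂ + 1) n).Adj v u := by
  intro v hv
  rcases lt_trichotomy (v.1 : ℕ) m₁ with hrow | hrow | hrow
  · -- block 1
    set p : Fin m₁ × Fin n := (⟨v.1.1, hrow⟩, v.2) with hp
    have hvp : v = emb1 m₂ p := by ext <;> simp [emb1, hp]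
    have hpS : p ∉ S₁ := by
      intro h
      exact hv (Or.inl (Or.inl ⟨p, h, hvp.symm⟩))
    obtain ⟨u, hu, hadj⟩ := h₁.2 p hpS
    exact ⟨emb1 m₂ u, Or.inl (Or.inl ⟨u, hu, rfl⟩), by rw [hvp, adj_emb1]; exact hadj⟩
  · -- middle row
    have hmid : ¬ midsel S₁ S₂ v.2.1 := fun h => hv (Or.inr ⟨hrow, h⟩)
    have hv' : v = ((⟨m₁, by omega⟩ : Fin (m₁ + m₂ + 1)), v.2) := by
      ext <;> simp [hrow]
    cases hj : (v.2 : ℕ) with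
    | zero =>
      rw [hj] at hmid
      rw [show midsel S₁ S₂ 0 = free S₁ S₂ 0 from rfl] at hmid
      unfold free at hmid
      push_neg at hmid
      obtain ⟨hlt, u, hu, hadj⟩ := hmid
      refine ⟨u, Or.inl hu, ?_⟩
      have : v = ((⟨m₁, by omega⟩ : Fin (m₁ + m₂ + 1)), (⟨0, hlt⟩ : Fin n)) := by
        ext <;> simp [hrow.symm, hj]
      rw [this]; exact hadj
    | succ j =>
      rw [hj] at hmid
      rw [show midsel S₁ S₂ (j+1) = (free S₁ S₂ (j+1) ∧ ¬ midsel S₁ S₂ j) from rfl] at hmid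
      push_neg at hmid
      by_cases hfree : free S₁ S₂ (j+1)
      · -- then midsel j holds, and (m₁, j) ∈ bigS, adjacent to v
        have hmj := hmid hfree
        have hjn : j < n := by have := v.2.isLt; omega
        refine ⟨((⟨m₁, by omega⟩ : Fin (m₁ + m₂ + 1)), (⟨j, hjn⟩ : Fin n)),
          Or.inr ⟨rfl, hmj⟩, ?_⟩
        rw [grid_adj]
        left
        constructor
        · simpa using hrow
        · right; simp [hj]
      · unfold free at hfree
        push_neg at hfree
        obtain ⟨hlt, u, hu, hadj⟩ := hfree
        refine ⟨u, Or.inl hu, ?_⟩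
        have : v = ((⟨m₁, by omega⟩ : Fin (m₁ + m₂ + 1)), (⟨j+1, hlt⟩ : Fin n)) := by
          ext <;> simp [hrow, hj]
        rw [this]; exact hadj
  · -- block 2
    have hlt : (v.1 : ℕ) - (m₁ + 1) < m₂ := by have := v.1.isLt; omega
    set p : Fin m₂ × Fin n := (⟨v.1.1 - (m₁ + 1), hlt⟩, v.2) with hp
    have hvp : v = emb2 m₁ p := by ext <;> simp [emb2, hp] <;> omega
    have hpS : p ∉ S₂ := by
      intro h
      exact hv (Or.inl (Or.inr ⟨p, h, hvp.symm⟩))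
    obtain ⟨u, hu, hadj⟩ := h₂.2 p hpS
    exact ⟨emb2 m₁ u, Or.inl (Or.inr ⟨u, hu, rfl⟩), by rw [hvp, adj_emb2]; exact hadj⟩

lemma big_isMIS {S₁ : Set (Fin m₁ × Fin n)} {S₂ : Set (Fin m₂ × Fin n)}
    (h₁ : IsMaxIndep (gridGraph m₁ n) S₁) (h₂ : IsMaxIndep (gridGraph m₂ n) S₂) :
    IsMaxIndep (gridGraph (m₁ + m₂ + 1) n) (bigS S₁ S₂) :=
  ⟨big_indep h₁ h₂, big_maximal h₁ h₂⟩

lemma bigS_inj1 {S₁ : Set (Fin m₁ × Fin n)} {S₂ : Set (Fin m₂ × Fin n)} (p : Fin m₁ × Fin n) :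
    emb1 m₂ p ∈ bigS S₁ S₂ ↔ p ∈ S₁ := by
  constructor
  · rintro ((⟨q, hq, heq⟩ | ⟨q, hq, heq⟩) | ⟨hrow, -⟩)
    · have : q = p := by
        have h1 : ((emb1 m₂ q).1 : ℕ) = ((emb1 m₂ p).1 : ℕ) := by rw [heq]
        have h2 : (emb1 m₂ q).2 = (emb1 m₂ p).2 := by rw [heq]
        simp [emb1] at h1 h2
        ext
        · exact h1
        · simpa using congrArg Fin.val h2
      exact this ▸ hq
    · exfalso
      have h1 : ((emb2 m₁ q).1 : ℕ) = ((emb1 m₂ p).1 : ℕ) := by rw [heq]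
      simp [emb1, emb2] at h1
      have := p.1.isLt
      omega
    · exfalso
      have := p.1.isLt
      simp [emb1] at hrow
      omega
  · intro h
    exact Or.inl (Or.inl ⟨p, h, rfl⟩)

lemma bigS_inj2 {S₁ : Set (Fin m₁ × Fin n)} {S₂ : Set (Fin m₂ × Fin n)} (p : Fin m₂ × Fin n) :
    emb2 m₁ p ∈ bigS S₁ S₂ ↔ p ∈ S₂ := by
  constructor
  · rintro ((⟨q, hq, heq⟩ | ⟨q, hq, heq⟩) | ⟨hrow, -⟩)
    · exfalso
      have h1 : ((emb1 m₂ q).1 : ℕ) = ((emb2 m₁ p).1 : ℕ) := by rw [heq]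
      simp [emb1, emb2] at h1
      have := q.1.isLt
      omega
    · have : q = p := by
        have h1 : ((emb2 m₁ q).1 : ℕ) = ((emb2 m₁ p).1 : ℕ) := by rw [heq]
        have h2 : (emb2 m₁ q).2 = (emb2 m₁ p).2 := by rw [heq]
        simp [emb2] at h1 h2
        ext
        · exact h1
        · simpa using congrArg Fin.val h2
      exact this ▸ hq
    · exfalso
      simp [emb2] at hrow
      omega
  · intro h
    exact Or.inl (Or.inr ⟨p, h, rfl⟩)

lemma super_row (m₁ m₂ n : ℕ) :
    numMIS (gridGraph m₁ n) * numMIS (gridGraph m₂ n) ≤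
      numMIS (gridGraph (m₁ + m₂ + 1) n) := by
  rw [numMIS, numMIS, numMIS, ← Nat.card_prod]
  apply Nat.card_le_card_of_injective
    (fun q : {S : Set (Fin m₁ × Fin n) // IsMaxIndep (gridGraph m₁ n) S} ×
             {S : Set (Fin m₂ × Fin n) // IsMaxIndep (gridGraph m₂ n) S} =>
      (⟨bigS q.1.1 q.2.1, big_isMIS q.1.2 q.2.2⟩ :
        {S : Set (Fin (m₁ + m₂ + 1) × Fin n) // IsMaxIndep (gridGraph (m₁ + m₂ + 1) n) S}))
  rintro ⟨⟨S₁, hS₁⟩, ⟨S₂, hS₂⟩⟩ ⟨⟨T₁, hT₁⟩, ⟨T₂, hT₂⟩⟩ h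
  simp only [Subtype.mk.injEq] at h
  have h1 : S₁ = T₁ := by
    ext p
    rw [← bigS_inj1 (S₂ := S₂) p, ← bigS_inj1 (S₂ := T₂) p, h]
  have h2 : S₂ = T₂ := by
    ext p
    rw [← bigS_inj2 (S₁ := S₁) p, ← bigS_inj2 (S₁ := T₁) p, h]
  simp [h1, h2]

end Super

lemma isMaxIndep_image {V W : Type*} (e : V ≃ W) (G : SimpleGraph V) (H : SimpleGraph W)
    (h : ∀ u v, G.Adj u v ↔ H.Adj (e u) (e v)) {S : Set V} (hS : IsMaxIndep G S) :
    IsMaxIndep H (e '' S) := by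
  constructor
  · rintro u ⟨a, ha, rfl⟩ v ⟨b, hb, rfl⟩ hA
    exact hS.1 a ha b hb ((h a b).mpr hA)
  · intro w hw
    have : e.symm w ∉ S := fun hc => hw ⟨e.symm w, hc, by simp⟩
    obtain ⟨u, hu, hadj⟩ := hS.2 _ this
    refine ⟨e u, ⟨u, hu, rfl⟩, ?_⟩
    have := (h (e.symm w) u).mp hadj
    simpa using this

lemma numMIS_congr {V W : Type*} (e : V ≃ W) (G : SimpleGraph V) (H : SimpleGraph W)
    (h : ∀ u v, G.Adj u v ↔ H.Adj (e u) (e v)) : numMIS G = numMIS H := by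
  apply Nat.card_congr
  refine (Equiv.Set.congr e).subtypeEquiv (fun S => ?_)
  have h' : ∀ u v, H.Adj u v ↔ G.Adj (e.symm u) (e.symm v) := by
    intro u v
    rw [h (e.symm u) (e.symm v)]
    simp
  constructor
  · intro hS
    have := isMaxIndep_image e G H h hS
    simpa [Equiv.Set.congr] using this
  · intro hS
    have := isMaxIndep_image e.symm H G h' hS
    have heq : e.symm '' (Equiv.Set.congr e S) = S := by
      simp [Equiv.Set.congr]
    rwa [heq] at this

lemma numMIS_symm (m n : ℕ) : numMIS (gridGraph m n) = numMIS (gridGraph n m) := by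
  apply numMIS_congr (Equiv.prodComm (Fin m) (Fin n))
  intro u v
  simp only [grid_adj, Equiv.prodComm_apply, Prod.fst_swap, Prod.snd_swap]
  tauto

lemma super_col (m n₁ n₂ : ℕ) :
    numMIS (gridGraph m n₁) * numMIS (gridGraph m n₂) ≤
      numMIS (gridGraph m (n₁ + n₂ + 1)) := by
  rw [numMIS_symm m n₁, numMIS_symm m n₂, numMIS_symm m (n₁ + n₂ + 1)]
  exact super_row n₁ n₂ m

lemma numMIS_row_mono {m m' : ℕ} (n : ℕ) (h : m ≤ m') :
    numMIS (gridGraph m n) ≤ numMIS (gridGraph m' n) := by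
  rcases eq_or_lt_of_le h with rfl | hlt
  · exact le_refl _
  · have h1 : m + (m' - m - 1) + 1 = m' := by omega
    calc numMIS (gridGraph m n) ≤ numMIS (gridGraph m n) * numMIS (gridGraph (m' - m - 1) n) :=
          Nat.le_mul_of_pos_right _ (numMIS_pos _)
      _ ≤ numMIS (gridGraph (m + (m' - m - 1) + 1) n) := super_row _ _ _
      _ = numMIS (gridGraph m' n) := by rw [h1]

lemma numMIS_col_mono (m : ℕ) {n n' : ℕ} (h : n ≤ n') :
    numMIS (gridGraph m n) ≤ numMIS (gridGraph m n') := by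
  rw [numMIS_symm m n, numMIS_symm m n']
  exact numMIS_row_mono m h

lemma numMIS_row_pow (m n : ℕ) : ∀ k : ℕ, 1 ≤ k →
    numMIS (gridGraph m n) ^ k ≤ numMIS (gridGraph (k * (m + 1) - 1) n) := by
  intro k
  induction k with
  | zero => omega
  | succ k ih =>
    intro _
    rcases Nat.eq_zero_or_pos k with rfl | h1
    · have h0 : 0 + 1 = 1 := rfl
      have : 1 * (m + 1) - 1 = m := by omega
      rw [h0, this, pow_one]
    · have hk : 1 ≤ k := h1
      have harith : (k * (m + 1) - 1) + m + 1 = (k + 1) * (m + 1) - 1 := by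
        have : 1 ≤ k * (m+1) := Nat.one_le_iff_ne_zero.mpr (by positivity)
        ring_nf
        omega
      calc numMIS (gridGraph m n) ^ (k + 1)
          = numMIS (gridGraph (m) n) ^ k * numMIS (gridGraph m n) := pow_succ _ _
        _ ≤ numMIS (gridGraph (k * (m + 1) - 1) n) * numMIS (gridGraph m n) :=
            Nat.mul_le_mul_right _ (ih hk)
        _ ≤ numMIS (gridGraph ((k * (m + 1) - 1) + m + 1) n) := super_row _ _ _
        _ = numMIS (gridGraph ((k + 1) * (m + 1) - 1) n) := by rw [harith]

lemma numMIS_col_pow (m n : ℕ) : ∀ l : ℕ, 1 ≤ l →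
    numMIS (gridGraph m n) ^ l ≤ numMIS (gridGraph m (l * (n + 1) - 1)) := by
  intro l hl
  rw [numMIS_symm m n, numMIS_symm m (l * (n+1) - 1)]
  exact numMIS_row_pow n m l hl

lemma numMIS_tile {m₀ n₀ m n k l : ℕ} (hk : 1 ≤ k) (hl : 1 ≤ l)
    (hm : k * (m₀ + 1) - 1 ≤ m) (hn : l * (n₀ + 1) - 1 ≤ n) :
    numMIS (gridGraph m₀ n₀) ^ (k * l) ≤ numMIS (gridGraph m n) := by
  calc numMIS (gridGraph m₀ n₀) ^ (k * l)
      = (numMIS (gridGraph m₀ n₀) ^ k) ^ l := by rw [pow_mul]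
    _ ≤ numMIS (gridGraph (k * (m₀ + 1) - 1) n₀) ^ l :=
        Nat.pow_le_pow_left (numMIS_row_pow m₀ n₀ k hk) l
    _ ≤ numMIS (gridGraph (k * (m₀ + 1) - 1) (l * (n₀ + 1) - 1)) :=
        numMIS_col_pow _ _ l hl
    _ ≤ numMIS (gridGraph m (l * (n₀ + 1) - 1)) := numMIS_row_mono _ hm
    _ ≤ numMIS (gridGraph m n) := numMIS_col_mono _ hn

noncomputable def Xset : Set ℝ :=
  {x : ℝ | ∃ m' n' : ℕ, 1 ≤ m' ∧ 1 ≤ n' ∧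
    x = (numMIS (gridGraph m' n') : ℝ) ^ ((1 : ℝ) / ((m' + 1) * (n' + 1)))}

lemma one_le_A (m n : ℕ) : (1 : ℝ) ≤ (numMIS (gridGraph m n) : ℝ) := by
  exact_mod_cast numMIS_pos (gridGraph m n)

lemma A_le_rpow (m n : ℕ) :
    (numMIS (gridGraph m n) : ℝ) ≤ (2 : ℝ) ^ ((((m : ℝ) + 1) * ((n : ℝ) + 1))) := by
  have h1 : (numMIS (gridGraph m n) : ℝ) ≤ ((2 ^ (m * n) : ℕ) : ℝ) := by
    exact_mod_cast numMIS_le m n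
  have h2 : ((2 ^ (m * n) : ℕ) : ℝ) = (2 : ℝ) ^ (((m * n : ℕ) : ℝ)) := by
    rw [Real.rpow_natCast]
    push_cast
    ring
  have h3 : (((m * n : ℕ) : ℝ)) ≤ ((m : ℝ) + 1) * ((n : ℝ) + 1) := by
    push_cast
    nlinarith [Nat.cast_nonneg (α := ℝ) m, Nat.cast_nonneg (α := ℝ) n]
  calc (numMIS (gridGraph m n) : ℝ) ≤ (2 : ℝ) ^ (((m * n : ℕ) : ℝ)) := h2 ▸ h1
    _ ≤ (2 : ℝ) ^ ((((m : ℝ) + 1) * ((n : ℝ) + 1))) :=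
        Real.rpow_le_rpow_of_exponent_le one_le_two h3

lemma Xset_bounds {x : ℝ} (hx : x ∈ Xset) : 1 ≤ x ∧ x ≤ 2 := by
  obtain ⟨m, n, hm, hn, rfl⟩ := hx
  have hP : (0 : ℝ) < ((m : ℝ) + 1) * ((n : ℝ) + 1) := by positivity
  constructor
  · calc (1 : ℝ) = (1 : ℝ) ^ ((1 : ℝ) / (((m : ℝ) + 1) * ((n : ℝ) + 1))) :=
        (Real.one_rpow _).symm
      _ ≤ _ := Real.rpow_le_rpow zero_le_one (one_le_A m n) (by positivity)
  · calc (numMIS (gridGraph m n) : ℝ) ^ ((1 : ℝ) / (((m : ℝ) + 1) * ((n : ℝ) + 1)))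
        ≤ ((2 : ℝ) ^ ((((m : ℝ) + 1) * ((n : ℝ) + 1)))) ^
            ((1 : ℝ) / (((m : ℝ) + 1) * ((n : ℝ) + 1))) :=
          Real.rpow_le_rpow (by positivity) (A_le_rpow m n) (by positivity)
      _ = 2 := by
          rw [← Real.rpow_mul (by norm_num), mul_one_div_cancel hP.ne', Real.rpow_one]

lemma Xset_nonempty : Xset.Nonempty :=
  ⟨_, 1, 1, le_refl 1, le_refl 1, rfl⟩

lemma Xset_bdd : BddAbove Xset :=
  ⟨2, fun _ hx => (Xset_bounds hx).2⟩

lemma delta_exists {ε : ℝ} (hε : 0 < ε) :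
    ∃ δ : ℝ, 0 < δ ∧ ∀ x : ℝ, 0 ≤ x → x ≤ δ → (2 : ℝ) ^ x < 1 + ε := by
  have hlog2 : 0 < Real.log 2 := Real.log_pos one_lt_two
  have hlogε : 0 < Real.log (1 + ε) := Real.log_pos (by linarith)
  refine ⟨Real.log (1 + ε) / Real.log 2 / 2, by positivity, fun x hx hxd => ?_⟩
  have h1 : (2 : ℝ) ^ x ≤ (2 : ℝ) ^ (Real.log (1 + ε) / Real.log 2 / 2) :=
    Real.rpow_le_rpow_of_exponent_le one_le_two hxd
  have h2 : (2 : ℝ) ^ (Real.log (1 + ε) / Real.log 2 / 2) =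
      Real.exp (Real.log (1 + ε) / 2) := by
    rw [Real.rpow_def_of_pos two_pos]
    congr 1
    field_simp
  have h3 : Real.exp (Real.log (1 + ε) / 2) < Real.exp (Real.log (1 + ε)) :=
    Real.exp_lt_exp.mpr (by linarith)
  rw [Real.exp_log (by linarith : (0:ℝ) < 1 + ε)] at h3
  calc (2 : ℝ) ^ x ≤ _ := h1
    _ = _ := h2
    _ < 1 + ε := h3


lemma sub_le_rpow_one_sub {x₀ ε δ : ℝ} (hx₀1 : 1 ≤ x₀) (hx₀2 : x₀ ≤ 2)
    (hδ0 : 0 < δ) (hd2 : (2:ℝ) ^ δ < 1 + ε/4) :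
    x₀ - ε/2 ≤ x₀ ^ ((1:ℝ) - δ) := by
  have hx₀0 : (0:ℝ) < x₀ := by linarith
  have h2d1 : (1:ℝ) ≤ (2:ℝ) ^ δ := by
    calc (1:ℝ) = (2:ℝ) ^ (0:ℝ) := (Real.rpow_zero 2).symm
      _ ≤ (2:ℝ) ^ δ := Real.rpow_le_rpow_of_exponent_le one_le_two hδ0.le
  have hx₀δ : x₀ ^ δ ≤ (2:ℝ) ^ δ := Real.rpow_le_rpow (by linarith) hx₀2 hδ0.le
  have hx₀δpos : (0:ℝ) < x₀ ^ δ := Real.rpow_pos_of_pos hx₀0 δ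
  have hsplit : x₀ ^ ((1:ℝ) - δ) = x₀ / x₀ ^ δ := by
    rw [eq_div_iff hx₀δpos.ne', ← Real.rpow_add hx₀0]
    norm_num
  rw [hsplit]
  have hstep : x₀ / (2:ℝ) ^ δ ≤ x₀ / x₀ ^ δ := by gcongr
  refine le_trans ?_ hstep
  rw [le_div_iff₀ (by linarith : (0:ℝ) < (2:ℝ) ^ δ)]
  nlinarith [mul_nonneg (by linarith : (0:ℝ) ≤ 2 - x₀) (by linarith : (0:ℝ) ≤ (2:ℝ)^δ - 1),
    mul_nonneg (by linarith : (0:ℝ) ≤ ε/2) (by linarith : (0:ℝ) ≤ (2:ℝ)^δ - 1)]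

set_option maxHeartbeats 1000000 in
theorem maximal_hard_square_entropy :
    ∀ ε > (0 : ℝ), ∃ N : ℕ, ∀ m n : ℕ, N ≤ m → N ≤ n →
      |(numMIS (gridGraph m n) : ℝ) ^ ((1 : ℝ) / (m * n)) -
        sSup {x : ℝ | ∃ m' n' : ℕ, 1 ≤ m' ∧ 1 ≤ n' ∧
          x = (numMIS (gridGraph m' n') : ℝ) ^ ((1 : ℝ) / ((m' + 1) * (n' + 1)))}| < ε := by
  have hXeq : {x : ℝ | ∃ m' n' : ℕ, 1 ≤ m' ∧ 1 ≤ n' ∧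
      x = (numMIS (gridGraph m' n') : ℝ) ^ ((1 : ℝ) / ((m' + 1) * (n' + 1)))} = Xset := rfl
  rw [hXeq]
  intro ε hε
  set L := sSup Xset with hLdef
  -- basic facts about L
  have hL2 : L ≤ 2 := csSup_le Xset_nonempty (fun _ hx => (Xset_bounds hx).2)
  have hL1 : 1 ≤ L := by
    obtain ⟨x, hx⟩ := Xset_nonempty
    exact le_trans (Xset_bounds hx).1 (le_csSup Xset_bdd hx)
  have hL0 : (0 : ℝ) < L := by linarith
  -- choose δ
  obtain ⟨δ, hδ0, hδprop⟩ := delta_exists (show (0:ℝ) < ε/4 by linarith)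
  -- choose a near-optimal element
  obtain ⟨x₀, hx₀X, hx₀gt⟩ := exists_lt_of_lt_csSup Xset_nonempty
    (show L - ε/2 < L by linarith)
  have hx₀1 : 1 ≤ x₀ := (Xset_bounds hx₀X).1
  have hx₀2 : x₀ ≤ 2 := (Xset_bounds hx₀X).2
  obtain ⟨m₀, n₀, hm₀, hn₀, hx₀eq⟩ := hx₀X
  -- choose N
  set N : ℕ := max (max m₀ n₀) (max 1 ⌈((m₀ : ℝ) + n₀ + 3)/δ⌉₊) with hNdef
  have hN1 : 1 ≤ N := le_trans (le_max_left _ _) (le_max_right _ _)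
  have hNm₀ : m₀ ≤ N := le_trans (le_max_left _ _) (le_max_left _ _)
  have hNn₀ : n₀ ≤ N := le_trans (le_max_right _ _) (le_max_left _ _)
  have hNδ : ((m₀ : ℝ) + n₀ + 3) ≤ N * δ := by
    have h0 : ⌈((m₀ : ℝ) + n₀ + 3)/δ⌉₊ ≤ N := le_trans (le_max_right 1 _) (le_max_right (max m₀ n₀) _)
    have h1 : (⌈((m₀ : ℝ) + n₀ + 3)/δ⌉₊ : ℝ) ≤ (N : ℝ) := Nat.cast_le.mpr h0
    have h2 := Nat.le_ceil (((m₀ : ℝ) + n₀ + 3)/δ)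
    have h3 : ((m₀ : ℝ) + n₀ + 3)/δ ≤ N := le_trans h2 h1
    calc ((m₀ : ℝ) + n₀ + 3) = (((m₀ : ℝ) + n₀ + 3)/δ) * δ := by field_simp
      _ ≤ N * δ := mul_le_mul_of_nonneg_right h3 hδ0.le
  refine ⟨N, fun m n hm hn => ?_⟩
  -- cast facts
  have hm1 : 1 ≤ m := le_trans hN1 hm
  have hn1 : 1 ≤ n := le_trans hN1 hn
  have hmR : (1 : ℝ) ≤ m := by exact_mod_cast hm1
  have hnR : (1 : ℝ) ≤ n := by exact_mod_cast hn1
  have hNmR : (N : ℝ) ≤ m := by exact_mod_cast hm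
  have hNnR : (N : ℝ) ≤ n := by exact_mod_cast hn
  have hNR : (1 : ℝ) ≤ N := by exact_mod_cast hN1
  have hmn0 : (0 : ℝ) < (m : ℝ) * n := by nlinarith
  set A : ℝ := (numMIS (gridGraph m n) : ℝ) with hAdef
  have hA1 : (1 : ℝ) ≤ A := by rw [hAdef]; exact one_le_A m n
  clear_value A
  set x : ℝ := A ^ ((1 : ℝ) / ((m : ℝ) * n)) with hxdef
  clear_value x
  -- the key δ-inequalities
  have hδq' : (m : ℝ) + n + 1 ≤ δ * ((m : ℝ) * n) := by
    have u1 : (N : ℝ) * (m : ℝ) ≤ (n : ℝ) * (m : ℝ) :=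
      mul_le_mul_of_nonneg_right hNnR (by linarith)
    have u2 : (N : ℝ) * (n : ℝ) ≤ (m : ℝ) * (n : ℝ) :=
      mul_le_mul_of_nonneg_right hNmR (by linarith)
    have u3 : (N : ℝ) ≤ (m : ℝ) * n :=
      le_trans hNmR (le_mul_of_one_le_right (by linarith) hnR)
    have u4 : (3 : ℝ) ≤ (N : ℝ) * δ := by
      have := Nat.cast_nonneg (α := ℝ) m₀
      have := Nat.cast_nonneg (α := ℝ) n₀
      linarith
    have u5 : 3 * ((m : ℝ) * n) ≤ ((N : ℝ) * δ) * ((m : ℝ) * n) :=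
      mul_le_mul_of_nonneg_right u4 hmn0.le
    have key : (N : ℝ) * ((m : ℝ) + n + 1) ≤ (N : ℝ) * (δ * ((m : ℝ) * n)) := by
      nlinarith [u1, u2, u3, u5]
    exact le_of_mul_le_mul_left key (by linarith)
  have hprod : (m₀ : ℝ) * n + (n₀ : ℝ) * m ≤ δ * ((m : ℝ) * n) := by
    have hm₀R : (0:ℝ) ≤ (m₀:ℝ) := Nat.cast_nonneg _
    have hn₀R : (0:ℝ) ≤ (n₀:ℝ) := Nat.cast_nonneg _
    have t1 : (N : ℝ) * ((m₀ : ℝ) * n) ≤ (m : ℝ) * ((m₀ : ℝ) * n) :=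
      mul_le_mul_of_nonneg_right hNmR (mul_nonneg hm₀R (by linarith))
    have t2 : (N : ℝ) * ((n₀ : ℝ) * m) ≤ (n : ℝ) * ((n₀ : ℝ) * m) :=
      mul_le_mul_of_nonneg_right hNnR (mul_nonneg hn₀R (by linarith))
    have t3 : ((m₀ : ℝ) + n₀) * ((m : ℝ) * n) ≤ ((N : ℝ) * δ) * ((m : ℝ) * n) :=
      mul_le_mul_of_nonneg_right (by linarith) hmn0.le
    have key : (N : ℝ) * ((m₀ : ℝ) * n + (n₀ : ℝ) * m) ≤ (N : ℝ) * (δ * ((m : ℝ) * n)) := by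
      nlinarith [t1, t2, t3]
    exact le_of_mul_le_mul_left key (by linarith)
  -- UPPER BOUND : x ≤ L + ε/2
  have hupper : x ≤ L + ε/2 := by
    have hP0 : (0 : ℝ) < ((m : ℝ) + 1) * ((n : ℝ) + 1) := by positivity
    have hmemX : A ^ ((1 : ℝ) / (((m : ℝ) + 1) * ((n : ℝ) + 1))) ∈ Xset :=
      ⟨m, n, hm1, hn1, by rw [hAdef]⟩
    have hle : A ^ ((1 : ℝ) / (((m : ℝ) + 1) * ((n : ℝ) + 1))) ≤ L := le_csSup Xset_bdd hmemX
    set q : ℝ := (((m : ℝ) + 1) * ((n : ℝ) + 1)) / ((m : ℝ) * n) with hqdef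
    clear_value q
    have hq1 : 1 ≤ q := by
      rw [hqdef, le_div_iff₀ hmn0]
      nlinarith
    have hqδ : q - 1 ≤ δ := by
      rw [hqdef, sub_le_iff_le_add, div_le_iff₀ hmn0]
      nlinarith
    have step1 : x = (A ^ ((1 : ℝ) / (((m : ℝ) + 1) * ((n : ℝ) + 1)))) ^ q := by
      rw [hxdef, ← Real.rpow_mul (by linarith : (0:ℝ) ≤ A)]
      congr 1
      rw [hqdef]
      field_simp
    have step2 : x ≤ L ^ q := by
      rw [step1]
      exact Real.rpow_le_rpow (Real.rpow_nonneg (by linarith) _) hle (by linarith)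
    have step3 : L ^ q = L * L ^ (q - 1) := by
      have h : L ^ q = L ^ (1 + (q - 1)) := by norm_num
      rw [h, Real.rpow_add hL0, Real.rpow_one]
    have step4 : L ^ (q - 1) ≤ (2 : ℝ) ^ (q - 1) :=
      Real.rpow_le_rpow (by linarith) hL2 (by linarith)
    have step5 : (2 : ℝ) ^ (q - 1) < 1 + ε/4 := hδprop _ (by linarith) hqδ
    have : x ≤ L * (1 + ε/4) := by
      calc x ≤ L ^ q := step2
        _ = L * L ^ (q - 1) := step3
        _ ≤ L * (1 + ε/4) := by nlinarith [step4, step5, hL0]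
    nlinarith
  -- LOWER BOUND : L - ε < x
  have hlower : L - ε < x := by
    set k : ℕ := (m + 1) / (m₀ + 1) with hkdef
    clear_value k
    set l : ℕ := (n + 1) / (n₀ + 1) with hldef
    clear_value l
    have hk1 : 1 ≤ k := by
      rw [hkdef]; exact (Nat.one_le_div_iff (by omega)).mpr (by omega)
    have hl1 : 1 ≤ l := by
      rw [hldef]; exact (Nat.one_le_div_iff (by omega)).mpr (by omega)
    have hkm : k * (m₀ + 1) - 1 ≤ m := by
      have h := Nat.div_mul_le_self (m + 1) (m₀ + 1)
      rw [← hkdef] at h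
      omega
    have hln : l * (n₀ + 1) - 1 ≤ n := by
      have h := Nat.div_mul_le_self (n + 1) (n₀ + 1)
      rw [← hldef] at h
      omega
    -- lower bounds on k, l
    have hkb : (m : ℝ) ≤ ((m₀ : ℝ) + 1) * k + m₀ := by
      have h1 := Nat.div_add_mod (m + 1) (m₀ + 1)
      rw [← hkdef] at h1
      have h2 := Nat.mod_lt (m + 1) (show 0 < m₀ + 1 by omega)
      have : m ≤ (m₀ + 1) * k + m₀ := by omega
      exact_mod_cast this
    have hlb : (n : ℝ) ≤ ((n₀ : ℝ) + 1) * l + n₀ := by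
      have h1 := Nat.div_add_mod (n + 1) (n₀ + 1)
      rw [← hldef] at h1
      have h2 := Nat.mod_lt (n + 1) (show 0 < n₀ + 1 by omega)
      have : n ≤ (n₀ + 1) * l + n₀ := by omega
      exact_mod_cast this
    have hNat : numMIS (gridGraph m₀ n₀) ^ (k * l) ≤ numMIS (gridGraph m n) :=
      numMIS_tile hk1 hl1 hkm hln
    set A₀ : ℝ := (numMIS (gridGraph m₀ n₀) : ℝ) with hA₀def
    have hA₀1 : (1 : ℝ) ≤ A₀ := by rw [hA₀def]; exact one_le_A m₀ n₀
    clear_value A₀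
    have hcast : A₀ ^ ((k * l : ℕ) : ℝ) ≤ A := by
      rw [Real.rpow_natCast, hAdef, hA₀def]
      exact_mod_cast hNat
    set P₀ : ℝ := ((m₀ : ℝ) + 1) * ((n₀ : ℝ) + 1) with hP₀def
    clear_value P₀
    have hP₀0 : (0 : ℝ) < P₀ := by
      rw [hP₀def]; positivity
    set E : ℝ := ((k * l : ℕ) : ℝ) * ((1 : ℝ) / ((m : ℝ) * n)) with hEdef
    clear_value E
    have c1 : A₀ ^ E ≤ x := by
      rw [hEdef, Real.rpow_mul (by linarith : (0:ℝ) ≤ A₀), hxdef]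
      exact Real.rpow_le_rpow (Real.rpow_nonneg (by linarith) _) hcast (by positivity)
    have c2 : A₀ ^ E = x₀ ^ (P₀ * E) := by
      rw [hx₀eq, ← Real.rpow_mul (by linarith : (0:ℝ) ≤ A₀)]
      congr 1
      field_simp
    have c3 : 1 - δ ≤ P₀ * E := by
      have hm₀m : (m₀ : ℝ) ≤ m := by exact_mod_cast le_trans hNm₀ hm
      have hn₀n : (n₀ : ℝ) ≤ n := by exact_mod_cast le_trans hNn₀ hn
      have hkR : (0:ℝ) ≤ (k:ℝ) := Nat.cast_nonneg _
      have hlR : (0:ℝ) ≤ (l:ℝ) := Nat.cast_nonneg _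
      have hkl : ((k * l : ℕ) : ℝ) = (k : ℝ) * l := by push_cast; ring
      rw [hEdef, hkl, hP₀def]
      rw [show ((m₀:ℝ) + 1) * ((n₀:ℝ) + 1) * ((k:ℝ) * l * (1 / ((m:ℝ) * n))) =
        ((((m₀:ℝ) + 1) * k) * (((n₀:ℝ) + 1) * l)) / ((m:ℝ) * n) by ring]
      rw [le_div_iff₀ hmn0]
      have e1 : (m : ℝ) - m₀ ≤ ((m₀ : ℝ) + 1) * k := by linarith
      have e2 : (n : ℝ) - n₀ ≤ ((n₀ : ℝ) + 1) * l := by linarith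
      have e3 : ((m : ℝ) - m₀) * ((n : ℝ) - n₀) ≤ (((m₀:ℝ) + 1) * k) * (((n₀:ℝ) + 1) * l) :=
        mul_le_mul e1 e2 (by linarith) (by positivity)
      nlinarith [mul_nonneg (Nat.cast_nonneg (α := ℝ) m₀) (Nat.cast_nonneg (α := ℝ) n₀)]
    have c4 : x₀ ^ ((1:ℝ) - δ) ≤ x₀ ^ (P₀ * E) :=
      Real.rpow_le_rpow_of_exponent_le hx₀1 c3
    have c5 : x₀ - ε/2 ≤ x₀ ^ ((1:ℝ) - δ) :=
      sub_le_rpow_one_sub hx₀1 hx₀2 hδ0 (hδprop δ hδ0.le le_rfl)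
    calc L - ε = (L - ε/2) - ε/2 := by ring
      _ < x₀ - ε/2 := by linarith
      _ ≤ x₀ ^ ((1:ℝ) - δ) := c5
      _ ≤ x₀ ^ (P₀ * E) := c4
      _ = A₀ ^ E := c2.symm
      _ ≤ x := c1
  rw [abs_lt]
  constructor <;> linarith
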